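/- Let V be artinian local with maximal ideal m, C = C(Z_p, V), and M a C-module. For α, β ∈ Z_p distinct, the localization at (m:β) of the localization of M at (m:α) vanishes: (M_α)_β = 0; and (M_α)_α ≅ M_α. -/
import Mathlib


/-- Evaluation at `α ∈ ℤ_p` as a ring homomorphism on `C(ℤ_p, V)`. -/
noncomputable def evalHom (V : Type*) [CommRing V] (p : ℕ) [Fact p.Prime] (α : ℤ_[p]) :
    LocallyConstant ℤ_[p] V →+* V where
  toFun φ := φ α
  map_one' := rfl
  map_mul' _ _ := rfl
  map_zero' := rfl
  map_add' _ _ := rfl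

/-- The indicator function of the open ball around `α` of radius `dist α β`, as a locally
constant function. -/
noncomputable def indFun (V : Type*) [CommRing V] (p : ℕ) [Fact p.Prime] (α β : ℤ_[p]) :
    LocallyConstant ℤ_[p] V where
  toFun x := if dist x α < dist α β then 1 else 0
  isLocallyConstant := by
    classical
    rw [IsLocallyConstant.iff_exists_open]
    intro x
    by_cases hx : dist x α < dist α β
    · refine ⟨Metric.ball α (dist α β), Metric.isOpen_ball, by simpa [Metric.mem_ball] using hx,
        fun y hy => ?_⟩
      rw [Metric.mem_ball] at hy
      simp [hy, hx]
    · refine ⟨(Metric.ball α (dist α β))ᶜ,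
        (IsUltrametricDist.isClopen_ball α (dist α β)).1.isOpen_compl,
        by simpa [Metric.mem_ball] using hx, fun y hy => ?_⟩
      simp only [Set.mem_compl_iff, Metric.mem_ball] at hy
      simp [hy, hx]

lemma indFun_idem (V : Type*) [CommRing V] (p : ℕ) [Fact p.Prime] (α β : ℤ_[p]) :
    indFun V p α β * indFun V p α β = indFun V p α β := by
  ext x
  show indFun V p α β x * indFun V p α β x = indFun V p α β x
  by_cases h : dist x α < dist α β <;> simp [indFun, h]

lemma indFun_apply_self (V : Type*) [CommRing V] (p : ℕ) [Fact p.Prime] {α β : ℤ_[p]}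
    (h : α ≠ β) : indFun V p α β α = 1 := by
  simp [indFun, dist_pos.2 h]

lemma indFun_apply_ne (V : Type*) [CommRing V] (p : ℕ) [Fact p.Prime] (α β : ℤ_[p]) :
    indFun V p α β β = 0 := by
  simp [indFun, dist_comm β α]

/-- Stalks of a `C(ℤ_p,V)`-module: `(M_α)_β = 0` for `β ≠ α`, and the natural map
`M_α → (M_α)_α` is an isomorphism. Here `M_γ` denotes the localization of `M` at the
maximal ideal `(m:γ) = {φ : φ(γ) ∈ m}`. -/
theorem stmt10 (V : Type*) [CommRing V] [IsLocalRing V]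
    (p m0 : ℕ) [Fact p.Prime]
    (hm : IsLocalRing.maximalIdeal V ^ (m0 + 1) = ⊥)
    (M : Type*) [AddCommGroup M] [Module (LocallyConstant ℤ_[p] V) M]
    (α β : ℤ_[p]) :
    (α ≠ β → Subsingleton (LocalizedModule
        (((IsLocalRing.maximalIdeal V).comap (evalHom V p β)).primeCompl)
        (LocalizedModule
          (((IsLocalRing.maximalIdeal V).comap (evalHom V p α)).primeCompl) M))) ∧
      Function.Bijective (LocalizedModule.mkLinearMap
        (((IsLocalRing.maximalIdeal V).comap (evalHom V p α)).primeCompl)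
        (LocalizedModule
          (((IsLocalRing.maximalIdeal V).comap (evalHom V p α)).primeCompl) M)) := by
  classical
  set Sα := ((IsLocalRing.maximalIdeal V).comap (evalHom V p α)).primeCompl with hSαdef
  set Sβ := ((IsLocalRing.maximalIdeal V).comap (evalHom V p β)).primeCompl with hSβdef
  have hone : (1 : V) ∉ IsLocalRing.maximalIdeal V := by
    intro h
    exact (IsLocalRing.maximalIdeal.isMaximal V).ne_top ((Ideal.eq_top_iff_one _).2 h)
  constructor
  · intro hne
    set φ : LocallyConstant ℤ_[p] V := indFun V p α β with hφdef
    have hφSα : φ ∈ Sα := by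
      intro h
      have : φ α ∈ IsLocalRing.maximalIdeal V := h
      rw [hφdef, indFun_apply_self V p hne] at this
      exact hone this
    have hψSβ : (1 - φ) ∈ Sβ := by
      intro h
      have : (1 - φ) β ∈ IsLocalRing.maximalIdeal V := h
      have h1 : (1 - φ) β = 1 := by
        show (1 : LocallyConstant ℤ_[p] V) β - φ β = 1
        rw [hφdef, indFun_apply_ne]
        simp
      rw [h1] at this
      exact hone this
    -- key: (1 - φ) kills every element of M_α
    have hkill : ∀ x : LocalizedModule Sα M, (1 - φ) • x = 0 := by
      intro x
      induction x using LocalizedModule.induction_on with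
      | h m s =>
        rw [LocalizedModule.smul'_mk, ← LocalizedModule.zero_mk (1 : Sα),
          LocalizedModule.mk_eq]
        refine ⟨⟨φ, hφSα⟩, ?_⟩
        have : φ • ((1 - φ) • m) = (φ * (1 - φ)) • m := (mul_smul _ _ _).symm
        have hz : φ * (1 - φ) = 0 := by
          rw [mul_sub, mul_one, indFun_idem, sub_self]
        simp only [Submonoid.smul_def, smul_zero, one_smul, Submonoid.coe_one]
        rw [this, hz, zero_smul]
    refine ⟨fun a b => ?_⟩
    have hzero : ∀ a : LocalizedModule Sβ (LocalizedModule Sα M), a = 0 := by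
      intro a
      induction a using LocalizedModule.induction_on with
      | h x s =>
        rw [← LocalizedModule.zero_mk (1 : Sβ), LocalizedModule.mk_eq]
        refine ⟨⟨1 - φ, hψSβ⟩, ?_⟩
        simp only [Submonoid.smul_def, smul_zero, one_smul, Submonoid.coe_one]
        exact hkill _
    rw [hzero a, hzero b]
  · -- every element of Sα acts invertibly on M_α, so localizing again does nothing
    have hid : IsLocalizedModule Sα
        (LinearMap.id : LocalizedModule Sα M →ₗ[LocallyConstant ℤ_[p] V]
          LocalizedModule Sα M) := by
      refine ⟨IsLocalizedModule.map_units (LocalizedModule.mkLinearMap Sα M), fun y => ⟨(y, 1), one_smul _ _⟩, fun h => ⟨1, by simpa using h⟩⟩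
    have h1 := IsLocalizedModule.iso_symm_comp Sα
      (LinearMap.id : LocalizedModule Sα M →ₗ[LocallyConstant ℤ_[p] V] LocalizedModule Sα M)
    have h2 : ⇑(LocalizedModule.mkLinearMap Sα (LocalizedModule Sα M)) =
        ⇑(IsLocalizedModule.iso Sα (LinearMap.id : LocalizedModule Sα M →ₗ[LocallyConstant ℤ_[p] V]
          LocalizedModule Sα M)).symm := by
      rw [← h1]; rfl
    rw [h2]
    exact (IsLocalizedModule.iso Sα _).symm.bijective
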